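/- arXiv:2007.03385 — 5 statements merged into one kernel-verified Lean document; each statement's English description precedes it below -/
import Mathlib

section
/- The free rack Fr(A) = A × F(A) satisfies the universal property: for any rack X and any function f: A → X, there is a unique rack homomorphism f̄: Fr(A) → X with f̄(a, e) = f(a) for all a ∈ A. -/
/-- A rack: a set with operations `◁`, `◁⁻¹` satisfying (R1) and (R2). -/
class PaperRack (X : Type*) where
  act : X → X → X
  inv : X → X → X
  r1a : ∀ x y, inv (act x y) y = x
  r1b : ∀ x y, act (inv x y) y = x
  r2 : ∀ x y z, act (act x y) z = act (act x z) (act y z)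

infixl:70 " ◁ " => PaperRack.act
infixl:70 " ◁⁻¹ " => PaperRack.inv

/-- The operation `(a,g) ◁ (b,h) = (a, g·h⁻¹·b·h)` on the free rack `A × F(A)`. -/
def frAct {A : Type*} (p q : A × FreeGroup A) : A × FreeGroup A :=
  (p.1, p.2 * q.2⁻¹ * FreeGroup.of q.1 * q.2)

namespace FRUP

variable {A X : Type*} [PaperRack X]

/-- The subgroup of rack-automorphism permutations of `X`. -/
def G (X : Type*) [PaperRack X] : Subgroup (Equiv.Perm X) where
  carrier := {σ | ∀ x y : X, σ (x ◁ y) = σ x ◁ σ y}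
  mul_mem' := by
    intro σ τ hσ hτ x y
    simp only [Set.mem_setOf_eq] at hσ hτ
    simp only [Equiv.Perm.mul_apply, hτ, hσ]
  one_mem' := by intro x y; rfl
  inv_mem' := by
    intro σ hσ x y
    simp only [Set.mem_setOf_eq] at hσ
    apply σ.injective
    rw [hσ]; simp

/-- Acting by `f a` is a rack automorphism. -/
def phi (f : A → X) (a : A) : G X :=
  ⟨{ toFun := fun x => x ◁ f a
     invFun := fun x => x ◁⁻¹ f a
     left_inv := fun x => PaperRack.r1a x (f a)
     right_inv := fun x => PaperRack.r1b x (f a) },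
   fun x y => PaperRack.r2 x y (f a)⟩

/-- The (anti)action of `FreeGroup A` on `X`, via the opposite group. -/
noncomputable def psi (f : A → X) : FreeGroup A →* (G X)ᵐᵒᵖ :=
  FreeGroup.lift (fun a => MulOpposite.op (phi f a))

noncomputable def H (f : A → X) (w : FreeGroup A) : Equiv.Perm X :=
  ((psi f w).unop : Equiv.Perm X)

theorem H_mul (f : A → X) (u v : FreeGroup A) (x : X) :
    H f (u * v) x = H f v (H f u x) := by
  simp [H, map_mul, MulOpposite.unop_mul, Subgroup.coe_mul]

theorem H_one (f : A → X) (x : X) : H f 1 x = x := by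
  simp [H, map_one]

theorem H_inv_cancel (f : A → X) (u : FreeGroup A) (x : X) :
    H f u⁻¹ (H f u x) = x := by
  rw [← H_mul, mul_inv_cancel, H_one]

theorem H_mem (f : A → X) (w : FreeGroup A) : H f w ∈ G X :=
  ((psi f w).unop).2

theorem H_of (f : A → X) (b : A) (x : X) : H f (FreeGroup.of b) x = x ◁ f b := by
  simp [H, psi, phi]

end FRUP

/-- Universal property of the free rack `Fr(A) = A × F(A)`: every function
`f : A → X` to a rack `X` extends uniquely to a rack homomorphism
`A × F(A) → X` sending `(a, e)` to `f a`. -/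
theorem freeRack_universal_property {A X : Type*} [PaperRack X] (f : A → X) :
    ∃! g : A × FreeGroup A → X,
      (∀ p q : A × FreeGroup A, g (frAct p q) = g p ◁ g q) ∧
      (∀ a : A, g (a, (1 : FreeGroup A)) = f a) := by
  classical
  refine ⟨fun p => FRUP.H f p.2 (f p.1), ⟨?_, ?_⟩, ?_⟩
  · rintro ⟨a, w⟩ ⟨b, h⟩
    show FRUP.H f (w * h⁻¹ * FreeGroup.of b * h) (f a) = _
    rw [FRUP.H_mul, FRUP.H_mul, FRUP.H_mul, FRUP.H_of]
    have := FRUP.H_mem f h (FRUP.H f h⁻¹ (FRUP.H f w (f a))) (f b)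
    rw [this]
    congr 1
    rw [← FRUP.H_mul, inv_mul_cancel, FRUP.H_one]
  · intro a; exact FRUP.H_one f (f a)
  · rintro g' ⟨hg1, hg2⟩
    funext p
    obtain ⟨a, w⟩ := p
    show g' (a, w) = FRUP.H f w (f a)
    -- key: act by a fixed element is injective
    have hinj : ∀ y : X, Function.Injective (fun x : X => x ◁ y) := by
      intro y x1 x2 h
      have := congrArg (fun z => z ◁⁻¹ y) h
      simpa [PaperRack.r1a] using this
    -- right-multiplication induction
    have key : ∀ w : FreeGroup A, ∀ v : FreeGroup A,
        (∀ a : A, g' (a, v) = FRUP.H f v (f a)) →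
        (∀ a : A, g' (a, v * w) = FRUP.H f (v * w) (f a)) := by
      intro w
      induction w using FreeGroup.induction_on with
      | C1 => intro v hv a; simpa using hv a
      | of b =>
        intro v hv a
        show g' (a, v * FreeGroup.of b) = FRUP.H f (v * FreeGroup.of b) (f a)
        have := hg1 (a, v) (b, 1)
        simp only [frAct, inv_one, mul_one, one_mul] at this
        rw [this, hv a, hg2 b, FRUP.H_mul, FRUP.H_of]
      | inv_of b ih =>
        intro v hv a
        show g' (a, v * (FreeGroup.of b)⁻¹) = FRUP.H f (v * (FreeGroup.of b)⁻¹) (f a)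
        apply hinj (f b)
        have h1 := hg1 (a, v * (FreeGroup.of b)⁻¹) (b, 1)
        simp only [frAct, inv_one, mul_one, one_mul, inv_mul_cancel_right] at h1
        show g' (a, v * (FreeGroup.of b)⁻¹) ◁ f b
            = FRUP.H f (v * (FreeGroup.of b)⁻¹) (f a) ◁ f b
        rw [← hg2 b, ← h1, hv a, hg2 b, ← FRUP.H_of f b, ← FRUP.H_mul, mul_assoc,
          inv_mul_cancel, mul_one]
      | mul x y ihx ihy =>
        intro v hv a
        rw [← mul_assoc]
        exact ihy (v * x) (ihx v hv) a
    have base : ∀ a : A, g' (a, (1 : FreeGroup A)) = FRUP.H f 1 (f a) := by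
      intro a; rw [hg2 a, FRUP.H_one]
    have := key w 1 base a
    simpa using this
end

section
/- Let G be a group generated by a subset A, and f: G → H a group homomorphism. The set K_f of f-symmetric paths — elements g ∈ G of the form g = g_a·g_b⁻¹ where g_a = a_1^{δ_1}···a_n^{δ_n}, g_b = b_1^{δ_1}···b_n^{δ_n} for pairs (a_i, b_i) ∈ A × A with f(a_i) = f(b_i) and δ_i ∈ {−1, 1} — is a normal subgroup of G, and equals the normal subgroup of G generated by the elements ab⁻¹ with a, b ∈ A and f(a) = f(b). -/
/-- Two elements `ga`, `gb` of `G` are `f`-symmetric to each other (with respect to a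
generating set `A`): `ga = a₁^{δ₁} ⋯ aₙ^{δₙ}` and `gb = b₁^{δ₁} ⋯ bₙ^{δₙ}` for pairs
`(aᵢ, bᵢ) ∈ A × A` with `f aᵢ = f bᵢ` and signs `δᵢ ∈ {-1, 1}`. -/
def FSymPair {G H : Type*} [Group G] [Group H] (A : Set G) (f : G →* H)
    (ga gb : G) : Prop :=
  ∃ (n : ℕ) (a b : Fin n → G) (δ : Fin n → ℤ),
    (∀ i, a i ∈ A ∧ b i ∈ A ∧ f (a i) = f (b i) ∧ (δ i = 1 ∨ δ i = -1)) ∧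
    ga = (List.ofFn fun i => a i ^ δ i).prod ∧
    gb = (List.ofFn fun i => b i ^ δ i).prod

section FSAux

variable {G H : Type*} [Group G] [Group H] (A : Set G) (f : G →* H)

def FS_Ok (L : List (G × G × ℤ)) : Prop :=
  ∀ t ∈ L, t.1 ∈ A ∧ t.2.1 ∈ A ∧ f t.1 = f t.2.1 ∧ (t.2.2 = 1 ∨ t.2.2 = -1)

def FS_prodA (L : List (G × G × ℤ)) : G := (L.map fun t => t.1 ^ t.2.2).prod
def FS_prodB (L : List (G × G × ℤ)) : G := (L.map fun t => t.2.1 ^ t.2.2).prod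

lemma fsym_iff {ga gb : G} :
    FSymPair A f ga gb ↔ ∃ L : List (G × G × ℤ),
      FS_Ok A f L ∧ ga = FS_prodA L ∧ gb = FS_prodB L := by
  constructor
  · rintro ⟨n, a, b, δ, h, rfl, rfl⟩
    refine ⟨List.ofFn fun i => (a i, b i, δ i), ?_, ?_, ?_⟩
    · intro t ht
      rw [List.mem_ofFn] at ht
      obtain ⟨i, rfl⟩ := ht
      exact h i
    · simp only [FS_prodA, List.map_ofFn]; rfl
    · simp only [FS_prodB, List.map_ofFn]; rfl
  · rintro ⟨L, hok, rfl, rfl⟩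
    refine ⟨L.length, fun i => (L.get i).1, fun i => (L.get i).2.1,
      fun i => (L.get i).2.2, fun i => hok _ (L.get_mem i), ?_, ?_⟩
    · show FS_prodA L = _
      rw [show (fun i => (L.get i).1 ^ (L.get i).2.2)
          = ((fun t : G × G × ℤ => t.1 ^ t.2.2) ∘ L.get) from rfl,
        ← List.map_ofFn, List.ofFn_get]
      rfl
    · show FS_prodB L = _
      rw [show (fun i => (L.get i).2.1 ^ (L.get i).2.2)
          = ((fun t : G × G × ℤ => t.2.1 ^ t.2.2) ∘ L.get) from rfl,
        ← List.map_ofFn, List.ofFn_get]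
      rfl

def FS_revInv (L : List (G × G × ℤ)) : List (G × G × ℤ) :=
  (L.map fun t => (t.1, t.2.1, -t.2.2)).reverse

variable {A f}

lemma FS_Ok.revInv {L : List (G × G × ℤ)} (h : FS_Ok A f L) :
    FS_Ok A f (FS_revInv L) := by
  intro t ht
  rw [FS_revInv, List.mem_reverse, List.mem_map] at ht
  obtain ⟨s, hs, rfl⟩ := ht
  obtain ⟨h1, h2, h3, h4⟩ := h s hs
  refine ⟨h1, h2, h3, ?_⟩
  rcases h4 with h4 | h4 <;> simp [h4]

lemma FS_prodA_revInv (L : List (G × G × ℤ)) :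
    FS_prodA (FS_revInv L) = (FS_prodA L)⁻¹ := by
  simp only [FS_prodA, FS_revInv]
  rw [List.prod_inv_reverse, List.map_reverse, List.map_map, List.map_map]
  have he : ((fun t : G × G × ℤ => t.1 ^ t.2.2) ∘ fun t : G × G × ℤ => (t.1, t.2.1, -t.2.2))
      = ((fun x : G => x⁻¹) ∘ fun t : G × G × ℤ => t.1 ^ t.2.2) := by
    funext t; simp [zpow_neg]
  rw [he]

lemma FS_prodB_revInv (L : List (G × G × ℤ)) :
    FS_prodB (FS_revInv L) = (FS_prodB L)⁻¹ := by
  simp only [FS_prodB, FS_revInv]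
  rw [List.prod_inv_reverse, List.map_reverse, List.map_map, List.map_map]
  have he : ((fun t : G × G × ℤ => t.2.1 ^ t.2.2) ∘ fun t : G × G × ℤ => (t.1, t.2.1, -t.2.2))
      = ((fun x : G => x⁻¹) ∘ fun t : G × G × ℤ => t.2.1 ^ t.2.2) := by
    funext t; simp [zpow_neg]
  rw [he]

lemma FS_Ok.append {L₁ L₂ : List (G × G × ℤ)} (h₁ : FS_Ok A f L₁)
    (h₂ : FS_Ok A f L₂) : FS_Ok A f (L₁ ++ L₂) := by
  intro t ht
  rcases List.mem_append.mp ht with h | h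
  exacts [h₁ t h, h₂ t h]

lemma FS_prodA_append (L₁ L₂ : List (G × G × ℤ)) :
    FS_prodA (L₁ ++ L₂) = FS_prodA L₁ * FS_prodA L₂ := by
  simp [FS_prodA]

lemma FS_prodB_append (L₁ L₂ : List (G × G × ℤ)) :
    FS_prodB (L₁ ++ L₂) = FS_prodB L₁ * FS_prodB L₂ := by
  simp [FS_prodB]

def FS_diagB (L : List (G × G × ℤ)) : List (G × G × ℤ) :=
  L.map fun t => (t.2.1, t.2.1, t.2.2)

lemma FS_Ok.diagB {L : List (G × G × ℤ)} (h : FS_Ok A f L) :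
    FS_Ok A f (FS_diagB L) := by
  intro t ht
  rw [FS_diagB, List.mem_map] at ht
  obtain ⟨s, hs, rfl⟩ := ht
  obtain ⟨_, h2, _, h4⟩ := h s hs
  exact ⟨h2, h2, rfl, h4⟩

lemma FS_prodA_diagB (L : List (G × G × ℤ)) :
    FS_prodA (FS_diagB L) = FS_prodB L := by
  simp only [FS_prodA, FS_prodB, FS_diagB, List.map_map]; rfl

lemma FS_prodB_diagB (L : List (G × G × ℤ)) :
    FS_prodB (FS_diagB L) = FS_prodB L := by
  simp only [FS_prodB, FS_diagB, List.map_map]; rfl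

def FS_swap (L : List (G × G × ℤ)) : List (G × G × ℤ) :=
  L.map fun t => (t.2.1, t.1, t.2.2)

lemma FS_Ok.swap {L : List (G × G × ℤ)} (h : FS_Ok A f L) :
    FS_Ok A f (FS_swap L) := by
  intro t ht
  rw [FS_swap, List.mem_map] at ht
  obtain ⟨s, hs, rfl⟩ := ht
  obtain ⟨h1, h2, h3, h4⟩ := h s hs
  exact ⟨h2, h1, h3.symm, h4⟩

lemma FS_prodA_swap (L : List (G × G × ℤ)) :
    FS_prodA (FS_swap L) = FS_prodB L := by
  simp only [FS_prodA, FS_prodB, FS_swap, List.map_map]; rfl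

lemma FS_prodB_swap (L : List (G × G × ℤ)) :
    FS_prodB (FS_swap L) = FS_prodA L := by
  simp only [FS_prodA, FS_prodB, FS_swap, List.map_map]; rfl

variable (A f)

def FS_P : Set G := {g : G | ∃ L : List (G × G × ℤ),
    FS_Ok A f L ∧ g = FS_prodA L * (FS_prodB L)⁻¹}

lemma FS_P_eq :
    {g : G | ∃ ga gb : G, FSymPair A f ga gb ∧ g = ga * gb⁻¹} = FS_P A f := by
  ext g
  constructor
  · rintro ⟨ga, gb, hsym, rfl⟩
    obtain ⟨L, hok, rfl, rfl⟩ := (fsym_iff A f).mp hsym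
    exact ⟨L, hok, rfl⟩
  · rintro ⟨L, hok, rfl⟩
    exact ⟨_, _, (fsym_iff A f).mpr ⟨L, hok, rfl, rfl⟩, rfl⟩

def FS_K : Subgroup G where
  carrier := FS_P A f
  one_mem' := ⟨[], by intro t ht; simp at ht, by simp [FS_prodA, FS_prodB]⟩
  mul_mem' := by
    rintro x y ⟨L₁, h₁, rfl⟩ ⟨L₂, h₂, rfl⟩
    refine ⟨L₁ ++ FS_revInv (FS_diagB L₁) ++ L₂,
      (h₁.append (h₁.diagB.revInv)).append h₂, ?_⟩
    simp only [FS_prodA_append, FS_prodB_append, FS_prodA_revInv,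
      FS_prodB_revInv, FS_prodA_diagB, FS_prodB_diagB]
    group
  inv_mem' := by
    rintro x ⟨L, h, rfl⟩
    refine ⟨FS_swap L, h.swap, ?_⟩
    rw [FS_prodA_swap, FS_prodB_swap]
    group

lemma FS_word (l : List G) (hl : ∀ y ∈ l, y ∈ A ∪ A⁻¹) :
    ∃ Lg : List (G × G × ℤ), FS_Ok A f Lg ∧
      FS_prodA Lg = l.prod ∧ FS_prodB Lg = l.prod := by
  induction l with
  | nil =>
    exact ⟨[], by intro t ht; simp at ht, by simp [FS_prodA], by simp [FS_prodB]⟩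
  | cons y l ih =>
    obtain ⟨Lg, hok', hA', hB'⟩ := ih fun z hz => hl z (List.mem_cons_of_mem _ hz)
    rcases hl y List.mem_cons_self with hy | hy
    · refine ⟨(y, y, 1) :: Lg, ?_, ?_, ?_⟩
      · intro t ht
        rcases List.mem_cons.mp ht with rfl | ht
        · exact ⟨hy, hy, rfl, Or.inl rfl⟩
        · exact hok' t ht
      · simp only [FS_prodA, List.map_cons, List.prod_cons, zpow_one]
        exact congrArg (fun z => y * z) hA'
      · simp only [FS_prodB, List.map_cons, List.prod_cons, zpow_one]
        exact congrArg (fun z => y * z) hB'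
    · rw [Set.mem_inv] at hy
      refine ⟨(y⁻¹, y⁻¹, -1) :: Lg, ?_, ?_, ?_⟩
      · intro t ht
        rcases List.mem_cons.mp ht with rfl | ht
        · exact ⟨hy, hy, rfl, Or.inr rfl⟩
        · exact hok' t ht
      · simp only [FS_prodA, List.map_cons, List.prod_cons, zpow_neg_one, inv_inv]
        exact congrArg (fun z => y * z) hA'
      · simp only [FS_prodB, List.map_cons, List.prod_cons, zpow_neg_one, inv_inv]
        exact congrArg (fun z => y * z) hB'

lemma FS_K_normal (hA : Subgroup.closure A = ⊤) : (FS_K A f).Normal := by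
  constructor
  intro x hx g
  obtain ⟨L, hok, rfl⟩ := hx
  have hg : g ∈ Submonoid.closure (A ∪ A⁻¹) := by
    have h1 : g ∈ Subgroup.closure A := by rw [hA]; trivial
    rw [← Subgroup.mem_toSubmonoid, Subgroup.closure_toSubmonoid] at h1
    exact h1
  obtain ⟨l, hl, hprod⟩ := Submonoid.exists_list_of_mem_closure hg
  obtain ⟨Lg, hokg, hAg, hBg⟩ := FS_word A f l hl
  refine ⟨Lg ++ L ++ FS_revInv Lg, (hokg.append hok).append hokg.revInv, ?_⟩
  simp only [FS_prodA_append, FS_prodB_append, FS_prodA_revInv, FS_prodB_revInv,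
    hAg, hBg, hprod]
  group

end FSAux

/-- The set `K_f` of `f`-symmetric paths `ga·gb⁻¹` is a normal subgroup of `G`:
it equals the normal closure of `{a·b⁻¹ | a, b ∈ A, f a = f b}`. -/
theorem fSymmetricPaths_eq_normalClosure {G H : Type*} [Group G] [Group H]
    (A : Set G) (hA : Subgroup.closure A = ⊤) (f : G →* H) :
    {g : G | ∃ ga gb : G, FSymPair A f ga gb ∧ g = ga * gb⁻¹} =
      ↑(Subgroup.normalClosure
        {x : G | ∃ a ∈ A, ∃ b ∈ A, f a = f b ∧ x = a * b⁻¹}) := by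
  rw [FS_P_eq]
  set S : Set G := {x : G | ∃ a ∈ A, ∃ b ∈ A, f a = f b ∧ x = a * b⁻¹} with hS
  apply Set.eq_of_subset_of_subset
  · rintro g ⟨L, hok, rfl⟩
    induction L with
    | nil =>
      simp only [FS_prodA, FS_prodB, List.map_nil, List.prod_nil, inv_one, mul_one]
      exact Subgroup.one_mem _
    | cons t L ih =>
      obtain ⟨h1, h2, h3, h4⟩ := hok t List.mem_cons_self
      have ihm := ih fun s hs => hok s (List.mem_cons_of_mem _ hs)
      have key : t.1 ^ t.2.2 * (t.2.1 ^ t.2.2)⁻¹ ∈ Subgroup.normalClosure S := by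
        rcases h4 with h4 | h4
        · rw [h4, zpow_one, zpow_one]
          exact Subgroup.subset_normalClosure ⟨t.1, h1, t.2.1, h2, h3, rfl⟩
        · rw [h4, zpow_neg_one, zpow_neg_one, inv_inv]
          have hm : t.2.1 * t.1⁻¹ ∈ Subgroup.normalClosure S :=
            Subgroup.subset_normalClosure ⟨t.2.1, h2, t.1, h1, h3.symm, rfl⟩
          have := Subgroup.normalClosure_normal.conj_mem _ hm t.1⁻¹
          simpa [mul_assoc] using this
      have step : FS_prodA (t :: L) * (FS_prodB (t :: L))⁻¹
          = (t.1 ^ t.2.2) * (FS_prodA L * (FS_prodB L)⁻¹) * (t.1 ^ t.2.2)⁻¹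
            * (t.1 ^ t.2.2 * (t.2.1 ^ t.2.2)⁻¹) := by
        simp only [FS_prodA, FS_prodB, List.map_cons, List.prod_cons]
        group
      rw [step]
      exact Subgroup.mul_mem _
        (Subgroup.normalClosure_normal.conj_mem _ ihm _) key
  · have hKn := FS_K_normal A f hA
    have hle : Subgroup.normalClosure S ≤ FS_K A f := by
      apply Subgroup.normalClosure_le_normal
      rintro x ⟨a, ha, b, hb, hfe, rfl⟩
      refine ⟨[(a, b, 1)], ?_, ?_⟩
      · intro t ht
        rcases List.mem_cons.mp ht with rfl | ht
        · exact ⟨ha, hb, hfe, Or.inl rfl⟩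
        · simp at ht
      · simp [FS_prodA, FS_prodB]
    exact hle
end

section
/- Given a function f: A → B between sets, the kernel of the induced homomorphism F(f): F(A) → F(B) between free groups is the normal subgroup of F(A) generated by the elements a·b⁻¹ with a, b ∈ A and f(a) = f(b). -/
/-- The kernel of the map `F(f) : F(A) → F(B)` between free groups induced by a
function `f : A → B` is the normal closure of the elements `a·b⁻¹` with
`f a = f b`. -/
theorem ker_freeGroupMap_eq_normalClosure {A B : Type*} (f : A → B) :
    (FreeGroup.map f).ker =
      Subgroup.normalClosure
        {x : FreeGroup A |
          ∃ a b : A, f a = f b ∧ x = FreeGroup.of a * (FreeGroup.of b)⁻¹} := by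
  set S := {x : FreeGroup A |
      ∃ a b : A, f a = f b ∧ x = FreeGroup.of a * (FreeGroup.of b)⁻¹} with hS
  set N := Subgroup.normalClosure S with hN
  apply le_antisymm
  · -- ker ≤ N : build section into the quotient
    let ψ : FreeGroup B →* FreeGroup A ⧸ N :=
      FreeGroup.lift (fun b =>
        open Classical in if h : ∃ a, f a = b then
          ((FreeGroup.of h.choose : FreeGroup A) : FreeGroup A ⧸ N) else 1)
    have key : ψ.comp (FreeGroup.map f) = QuotientGroup.mk' N := by
      apply FreeGroup.ext_hom
      intro a
      have h : ∃ a', f a' = f a := ⟨a, rfl⟩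
      have hmem : (FreeGroup.of h.choose * (FreeGroup.of a)⁻¹ : FreeGroup A) ∈ N :=
        Subgroup.subset_normalClosure ⟨h.choose, a, h.choose_spec, rfl⟩
      have : ((FreeGroup.of h.choose : FreeGroup A) : FreeGroup A ⧸ N) =
          ((FreeGroup.of a : FreeGroup A) : FreeGroup A ⧸ N) := by
        rw [QuotientGroup.eq]
        have := N.inv_mem hmem
        simpa [mul_assoc] using (Subgroup.Normal.conj_mem (by infer_instance)
          _ this (FreeGroup.of a)⁻¹)
      simp only [MonoidHom.comp_apply, FreeGroup.map.of,
        QuotientGroup.mk'_apply, ψ, FreeGroup.lift_apply_of, dif_pos h]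
      exact this
    intro x hx
    have hx1 : (FreeGroup.map f) x = 1 := hx
    have : (QuotientGroup.mk' N) x = 1 := by
      rw [← key]; simp [MonoidHom.comp_apply, hx1]
    rwa [← QuotientGroup.ker_mk' N, MonoidHom.mem_ker]
  · refine Subgroup.normalClosure_le_normal ?_
    rintro x ⟨a, b, hab, rfl⟩
    simp [MonoidHom.mem_ker, hab]
end

section
/- Given a set A, the set A × F°(A), where F°(A) ≤ F(A) is the kernel of the characteristic map χ: F(A) → ℤ, with operations (a,g) ◁ (b,h) := (a, a⁻¹·g·h⁻¹·b·h) and (a,g) ◁⁻¹ (b,h) := (a, a⁻¹·g·h⁻¹·b⁻¹·h), is a quandle (satisfies (R1), (R2) and x ◁ x = x). -/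
/-- The characteristic homomorphism `χ : F(A) → ℤ` sending each generator to `1`. -/
def chi (A : Type*) : FreeGroup A →* Multiplicative ℤ :=
  FreeGroup.lift fun _ => Multiplicative.ofAdd (1 : ℤ)

/-- The free quandle operation `(a,g) ◁ (b,h) = (a, a⁻¹·g·h⁻¹·b·h)`. -/
def fqAct {A : Type*} (p q : A × FreeGroup A) : A × FreeGroup A :=
  (p.1, (FreeGroup.of p.1)⁻¹ * p.2 * q.2⁻¹ * FreeGroup.of q.1 * q.2)

/-- The free quandle operation `(a,g) ◁⁻¹ (b,h) = (a, a·g·h⁻¹·b⁻¹·h)`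
(the characteristic-zero normalization of `(a, g·h⁻¹·b⁻¹·h)`). -/
def fqInv {A : Type*} (p q : A × FreeGroup A) : A × FreeGroup A :=
  (p.1, FreeGroup.of p.1 * p.2 * q.2⁻¹ * (FreeGroup.of q.1)⁻¹ * q.2)

/-- The set `A × F°(A)`, where `F°(A) = ker χ`, is closed under the free quandle
operations and satisfies (R1), (R2) and the quandle axiom (Q1). -/
theorem freeQuandle_is_quandle {A : Type*} :
    (∀ p q : A × FreeGroup A, p.2 ∈ (chi A).ker → q.2 ∈ (chi A).ker →
      (fqAct p q).2 ∈ (chi A).ker ∧ (fqInv p q).2 ∈ (chi A).ker) ∧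
    (∀ p q : A × FreeGroup A, p.2 ∈ (chi A).ker → q.2 ∈ (chi A).ker →
      fqInv (fqAct p q) q = p ∧ fqAct (fqInv p q) q = p) ∧
    (∀ p q r : A × FreeGroup A,
      p.2 ∈ (chi A).ker → q.2 ∈ (chi A).ker → r.2 ∈ (chi A).ker →
      fqAct (fqAct p q) r = fqAct (fqAct p r) (fqAct q r)) ∧
    (∀ p : A × FreeGroup A, p.2 ∈ (chi A).ker → fqAct p p = p) := by
  refine ⟨?_, ?_, ?_, ?_⟩
  · intro p q hp hq
    simp only [MonoidHom.mem_ker, fqAct, fqInv, map_mul, map_inv, chi, FreeGroup.lift_apply_of] at *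
    rw [hp, hq]
    constructor <;> decide
  · intro p q hp hq
    exact ⟨Prod.ext rfl (by simp only [fqAct, fqInv]; group),
        Prod.ext rfl (by simp only [fqAct, fqInv]; group)⟩
  · intro p q r _ _ _
    apply Prod.ext
    · rfl
    · simp only [fqAct]; group
  · intro p _
    apply Prod.ext
    · rfl
    · simp only [fqAct]; group
end

section
/- The action of the free group F(A) on the free rack Fr(A) = A × F(A), given by (a,g)·h = (a, gh), is free: if (a, gh) = (a, g) then h = e. Consequently, the homomorphism s: F(A) → Inn(Fr(A)) induced by sending a generator a to the symmetry S_{(a,e)} is injective (when acting via this action), so Inn(Fr(A)) ≅ F(A). -/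
/-- The operation `(a,g) ◁⁻¹ (b,h) = (a, g·h⁻¹·b⁻¹·h)` on the free rack `A × F(A)`. -/
def frInv {A : Type*} (p q : A × FreeGroup A) : A × FreeGroup A :=
  (p.1, p.2 * q.2⁻¹ * (FreeGroup.of q.1)⁻¹ * q.2)

/-- The symmetry of the free rack `Fr(A) = A × F(A)` at a point `q`. -/
def frSym {A : Type*} (q : A × FreeGroup A) : Equiv.Perm (A × FreeGroup A) where
  toFun p := frAct p q
  invFun p := frInv p q
  left_inv p := by cases p; simp [frAct, frInv, mul_assoc]
  right_inv p := by cases p; simp [frAct, frInv, mul_assoc]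

/-- The reversal anti-automorphism of the free group. -/
def frRev {A : Type*} (w : FreeGroup A) : FreeGroup A :=
  ((FreeGroup.lift fun a => MulOpposite.op (FreeGroup.of a)) w).unop

@[simp] lemma frRev_of {A : Type*} (a : A) : frRev (FreeGroup.of a) = FreeGroup.of a := by
  simp [frRev]

@[simp] lemma frRev_one {A : Type*} : frRev (1 : FreeGroup A) = 1 := by
  simp [frRev]

lemma frRev_mul {A : Type*} (x y : FreeGroup A) : frRev (x * y) = frRev y * frRev x := by
  simp [frRev]

@[simp] lemma frRev_inv {A : Type*} (x : FreeGroup A) : frRev x⁻¹ = (frRev x)⁻¹ := by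
  simp [frRev]

@[simp] lemma frRev_frRev {A : Type*} (w : FreeGroup A) : frRev (frRev w) = w := by
  induction w using FreeGroup.induction_on with
  | C1 => simp
  | of a => show frRev (frRev (FreeGroup.of a)) = FreeGroup.of a; simp
  | inv_of a ih => show frRev (frRev (FreeGroup.of a)⁻¹) = (FreeGroup.of a)⁻¹; simp
  | mul x y ihx ihy => simp [frRev_mul, ihx, ihy]

lemma frLift_apply {A : Type*} (w : FreeGroup A) (p : A × FreeGroup A) :
    (FreeGroup.lift fun a : A => frSym ((a, 1) : A × FreeGroup A)) w p
      = (p.1, p.2 * frRev w) := by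
  induction w using FreeGroup.induction_on generalizing p with
  | C1 => simp
  | of a =>
      show (FreeGroup.lift fun a : A => frSym ((a, 1) : A × FreeGroup A)) (FreeGroup.of a) p
        = (p.1, p.2 * frRev (FreeGroup.of a))
      rw [FreeGroup.lift_apply_of, frRev_of]
      show frAct p (a, 1) = _
      simp [frAct]
  | inv_of a ih =>
      show (FreeGroup.lift fun a : A => frSym ((a, 1) : A × FreeGroup A)) (FreeGroup.of a)⁻¹ p
        = (p.1, p.2 * frRev (FreeGroup.of a)⁻¹)
      rw [map_inv]
      apply ((FreeGroup.lift fun a : A => frSym ((a, 1) : A × FreeGroup A))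
        (FreeGroup.of a)).injective
      have ih' : ∀ r : A × FreeGroup A,
          (FreeGroup.lift fun a : A => frSym ((a, 1) : A × FreeGroup A)) (FreeGroup.of a) r
            = (r.1, r.2 * frRev (FreeGroup.of a)) := ih
      rw [Equiv.Perm.coe_inv, Equiv.apply_symm_apply,
        ih' ((p.1, p.2 * frRev (FreeGroup.of a)⁻¹) : A × FreeGroup A)]
      simp
  | mul x y ihx ihy =>
      rw [map_mul]
      simp only [Equiv.Perm.mul_apply, ihy, ihx, frRev_mul, mul_assoc]

lemma frSym_eq_lift {A : Type*} (q : A × FreeGroup A) :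
    frSym q = (FreeGroup.lift fun a : A => frSym ((a, 1) : A × FreeGroup A))
      (frRev (q.2⁻¹ * FreeGroup.of q.1 * q.2)) := by
  refine Equiv.ext fun p => ?_
  rw [frLift_apply, frRev_frRev]
  show frAct p q = _
  simp [frAct, mul_assoc]

/-- The right action of `F(A)` on `Fr(A) = A × F(A)` by `(a,g)·h = (a,gh)` is free;
consequently the homomorphism `s : F(A) → Inn(Fr(A))` determined by sending a
generator `a` to the symmetry `S_{(a,e)}` is injective, and its image is the whole
group of inner automorphisms, so `Inn(Fr(A)) ≅ F(A)`. -/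
theorem freeRack_free_action_and_inn {A : Type*} :
    (∀ (a : A) (g h : FreeGroup A), (a, g * h) = (a, g) → h = 1) ∧
    Function.Injective
      (FreeGroup.lift fun a : A => frSym ((a, 1) : A × FreeGroup A)) ∧
    (FreeGroup.lift fun a : A => frSym ((a, 1) : A × FreeGroup A)).range =
      Subgroup.closure (Set.range (frSym (A := A))) := by
  refine ⟨?_, ?_, ?_⟩
  · intro a g h hgh
    have : g * h = g := (Prod.mk.injEq _ _ _ _).mp hgh |>.2
    exact mul_left_cancel (by rw [this, mul_one])
  · rw [injective_iff_map_eq_one]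
    intro w hw
    by_cases hA : Nonempty A
    · obtain ⟨a⟩ := hA
      have := frLift_apply w ((a, 1) : A × FreeGroup A)
      rw [hw] at this
      simp only [Equiv.Perm.one_apply, one_mul] at this
      have h1 : frRev w = 1 := ((Prod.mk.injEq _ _ _ _).mp this.symm).2
      have := congrArg frRev h1
      rwa [frRev_frRev, frRev_one] at this
    · clear hw
      induction w using FreeGroup.induction_on with
      | C1 => rfl
      | of a => exact absurd ⟨a⟩ hA
      | inv_of a _ => exact absurd ⟨a⟩ hA
      | mul x y ihx ihy => rw [ihx, ihy, one_mul]
  · rw [FreeGroup.range_lift_eq_closure]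
    apply le_antisymm
    · apply Subgroup.closure_mono
      rintro _ ⟨a, rfl⟩
      exact ⟨(a, 1), rfl⟩
    · rw [Subgroup.closure_le]
      rintro _ ⟨q, rfl⟩
      rw [SetLike.mem_coe, ← FreeGroup.range_lift_eq_closure]
      exact ⟨_, (frSym_eq_lift q).symm⟩
end
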